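/- Let m ∈ (1/2)ℤ_{>0}, s ∈ ℤ, and n, j ∈ ℤ. For every τ with Im τ > 0 and every z₂ ∈ ℂ, the function w ↦ Φ^{±[m;s]}(τ, w, z₂) has a simple pole at w = n + jτ, with residue lim_{w → n + jτ} (w − n − jτ) · Φ^{±[m;s]}(τ, w, z₂) = −(±1)^j (1/(2πi)) e^{−2πi j m z₂} e^{2πi j n m}. -/

import Mathlib

noncomputable section

open Complex

/-- `mexp w = e^{2πi w}`. -/
def mexp (w : ℂ) : ℂ := Complex.exp (2 * (Real.pi : ℂ) * Complex.I * w)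

/-- The signed mock theta function `Φ^{sgn[m;s]}(τ,z₁,z₂)`. -/
def PhiS (sgn : ℂ) (m s : ℝ) (τ z₁ z₂ : ℂ) : ℂ :=
  ∑' n : ℤ, sgn ^ n *
    mexp ((m : ℂ) * n * (z₁ + z₂) + (s : ℂ) * z₁ + τ * ((m : ℂ) * n ^ 2 + (s : ℂ) * n)) /
    (1 - mexp (z₁ + n * τ))

/-- The signed theta function `Θ^{sgn}_{j,m}(τ,z)`. -/
def ThetaS (sgn : ℂ) (j m : ℝ) (τ z : ℂ) : ℂ :=
  ∑' n : ℤ, sgn ^ n *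
    mexp ((m : ℂ) * z * ((n : ℂ) + ((j / (2 * m) : ℝ) : ℂ)) +
      τ * (m : ℂ) * ((n : ℂ) + ((j / (2 * m) : ℝ) : ℂ)) ^ 2)

/-- `E(x) = 2∫₀ˣ e^{-πu²} du`. -/
def Efun (x : ℝ) : ℝ := 2 * ∫ u in (0:ℝ)..x, Real.exp (-Real.pi * u ^ 2)

/-- `ψ_{m,n}(τ,z) = (n - 2m Im z / Im τ) √(Im τ / m)`. -/
def psiMN (m n : ℝ) (τ z : ℂ) : ℝ := (n - 2 * m * z.im / τ.im) * Real.sqrt (τ.im / m)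

/-- The real-analytic correction `R^{sgn}_{j,m}(τ,z)`; the summation variable `n ∈ j + 2mℤ`
is written as `n = j + 2mk`, `k ∈ ℤ`, so that `(±1)^{(n-j)/(2m)} = sgn^k`. -/
def RS (sgn : ℂ) (j m : ℝ) (τ z : ℂ) : ℂ :=
  ∑' k : ℤ, sgn ^ k *
    (((Real.sign (j + 2 * m * k - 1 / 2 - j + 2 * m) -
        Efun (psiMN m (j + 2 * m * k) τ z) : ℝ)) : ℂ) *
    Complex.exp (-(Real.pi : ℂ) * Complex.I * (((j + 2 * m * k : ℝ)) : ℂ) ^ 2 * τ / (2 * (m : ℂ))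
      + 2 * (Real.pi : ℂ) * Complex.I * (((j + 2 * m * k : ℝ)) : ℂ) * z)

/-- The modifier `Φ^{sgn[m;s]}_add`; the summation variable `j ∈ s + ℤ`, `s ≤ j < s + 2m`
is written as `j = s + i`, `0 ≤ i < ⌈2m⌉`. -/
def PhiAddS (sgn : ℂ) (m s : ℝ) (τ z₁ z₂ : ℂ) : ℂ :=
  ∑ i ∈ Finset.range ⌈2 * m⌉₊,
    RS sgn (s + i) m τ ((z₁ - z₂) / 2) * ThetaS sgn (s + i) m τ (z₁ + z₂)

/-- The modified (signed) mock theta function `Φ̃^{sgn[m;s]}`. -/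
def PhiTilde (sgn : ℂ) (m s : ℝ) (τ z₁ z₂ : ℂ) : ℂ :=
  PhiS sgn m s τ z₁ z₂ - (1 / 2) * PhiAddS sgn m s τ z₁ z₂

end

section Aux

open Complex

lemma mexp_add (a b : ℂ) : mexp (a + b) = mexp a * mexp b := by
  simp [mexp, mul_add, Complex.exp_add]

lemma mexp_int (k : ℤ) : mexp (k : ℂ) = 1 := by
  rw [mexp, show 2 * (Real.pi:ℂ) * Complex.I * (k:ℂ) = (k:ℤ) * (2 * Real.pi * Complex.I) by
    ring_nf, Complex.exp_int_mul_two_pi_mul_I]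

lemma norm_mexp (w : ℂ) : ‖mexp w‖ = Real.exp (-(2 * Real.pi * w.im)) := by
  rw [mexp, Complex.norm_exp]
  congr 1
  simp [Complex.mul_re, Complex.mul_im]

lemma continuous_mexp : Continuous mexp := by
  unfold mexp; fun_prop

lemma hasDerivAt_mexp (c x : ℂ) :
    HasDerivAt (fun w => mexp (w + c)) (2 * (Real.pi:ℂ) * Complex.I * mexp (x + c)) x := by
  have h : HasDerivAt (fun w : ℂ => 2 * (Real.pi:ℂ) * Complex.I * (w + c))
      (2 * (Real.pi:ℂ) * Complex.I * 1) x := ((hasDerivAt_id x).add_const c).const_mul _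
  simpa [mexp, mul_comm] using h.cexp

end Aux

/-- `Φ^{±[m;s]}(τ, ·, z₂)` has a simple pole at `w = n + jτ` with residue
`-(±1)^j (1/(2πi)) e^{-2πi j m z₂} e^{2πi j n m}`; here `m = m2/2 ∈ (1/2)ℤ_{>0}`,
`s ∈ ℤ`, `n, j ∈ ℤ`, and the `±` sign is `sgn ∈ {1, -1}`. -/
theorem stmt10 (m2 : ℤ) (hm2 : 0 < m2) (s n j : ℤ)
    (sgn : ℂ) (hsgn : sgn = 1 ∨ sgn = -1)
    (τ : ℂ) (hτ : 0 < τ.im) (z₂ : ℂ) :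
    Filter.Tendsto
      (fun w : ℂ => (w - ((n : ℂ) + (j : ℂ) * τ)) * PhiS sgn ((m2 : ℝ) / 2) (s : ℝ) τ w z₂)
      (nhdsWithin ((n : ℂ) + (j : ℂ) * τ) {((n : ℂ) + (j : ℂ) * τ)}ᶜ)
      (nhds (-(sgn ^ j) * (1 / (2 * (Real.pi : ℂ) * Complex.I)) *
        mexp (-(j : ℂ) * ((m2 : ℂ) / 2) * z₂) * mexp ((j : ℂ) * (n : ℂ) * ((m2 : ℂ) / 2)))) := by
  classical
  have hπ := Real.pi_pos
  set m : ℝ := (m2 : ℝ) / 2 with hm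
  have hm0 : 0 < m := by
    have : (0:ℝ) < (m2:ℝ) := by exact_mod_cast hm2
    simp [hm]; linarith
  set t : ℝ := τ.im with htdef
  have ht : 0 < t := hτ
  set r : ℝ := t / 2 with hrdef
  have hr : 0 < r := by positivity
  set p : ℂ := (n : ℂ) + (j : ℂ) * τ with hpdef
  have hpim : p.im = j * t := by simp [hpdef, htdef]
  set δ : ℝ := 1 - Real.exp (-(2 * Real.pi * r)) with hδdef
  have hδ : 0 < δ := by
    have h1 : Real.exp (-(2 * Real.pi * r)) < 1 := by
      rw [Real.exp_lt_one_iff]; nlinarith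
    simp only [hδdef]; linarith
  set Mw : ℝ := |(j : ℝ)| * t + r with hMwdef
  have hMw0 : 0 ≤ Mw := by positivity
  set A : ℝ := m * (Mw + |z₂.im|) + |(s : ℝ)| * t with hAdef
  set Cst : ℝ := Real.exp (2 * Real.pi * |(s : ℝ)| * Mw) / δ with hCdef
  have hCst : 0 < Cst := by positivity
  set T : ℤ → ℂ → ℂ := fun k w => sgn ^ k *
      mexp ((m : ℂ) * k * (w + z₂) + ((s:ℝ) : ℂ) * w + τ * ((m : ℂ) * k ^ 2 + ((s:ℝ) : ℂ) * k)) /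
      (1 - mexp (w + k * τ)) with hTdef
  have hPhi : ∀ w, PhiS sgn m (s : ℝ) τ w z₂ = ∑' k : ℤ, T k w := fun w => rfl
  -- basic facts about points of the closed ball
  have hball : ∀ w ∈ Metric.closedBall p r, |w.im - (j:ℝ) * t| ≤ r := by
    intro w hw
    have h1 : ‖w - p‖ ≤ r := by
      rw [Metric.mem_closedBall, Complex.dist_eq] at hw; exact hw
    have h2 := Complex.abs_im_le_norm (w - p)
    rw [Complex.sub_im, hpim] at h2
    calc |w.im - (j:ℝ)*t| ≤ ‖w - p‖ := h2
      _ ≤ r := h1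
  have hballM : ∀ w ∈ Metric.closedBall p r, |w.im| ≤ Mw := by
    intro w hw
    have h1 := hball w hw
    rw [abs_le] at h1 ⊢
    simp only [hMwdef]
    constructor <;>
      nlinarith [mul_le_mul_of_nonneg_right (neg_abs_le ((j:ℝ))) ht.le,
        mul_le_mul_of_nonneg_right (le_abs_self ((j:ℝ))) ht.le]
  clear_value Cst A Mw δ r t p m
  -- norm of sgn ^ k
  have hsgn1 : ∀ k : ℤ, ‖sgn ^ k‖ = 1 := by
    rcases hsgn with h | h <;> subst h <;> intro k <;>
      simp [norm_zpow]
  -- denominator lower bound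
  have hden : ∀ k : ℤ, k ≠ -j → ∀ w ∈ Metric.closedBall p r, δ ≤ ‖1 - mexp (w + k * τ)‖ := by
    intro k hk w hw
    have him : (w + (k:ℂ) * τ).im = w.im + (k:ℝ) * t := by
      simp [htdef, Complex.add_im, Complex.mul_im]
    have hnorm : ‖mexp (w + (k:ℂ) * τ)‖ = Real.exp (-(2 * Real.pi * (w.im + (k:ℝ) * t))) := by
      rw [norm_mexp, him]
    have hb := hball w hw
    rw [abs_le] at hb
    rcases lt_or_gt_of_ne hk with hkl | hkg
    · -- k < -j, i.e. k + j ≤ -1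
      have hkj : (k:ℝ) + (j:ℝ) ≤ -1 := by
        have : k + j ≤ -1 := by omega
        exact_mod_cast this
      have hx : w.im + (k:ℝ) * t ≤ -r := by
        have h5 := mul_le_mul_of_nonneg_right hkj ht.le
        linarith
      have h2 : Real.exp (2 * Real.pi * r) ≤ ‖mexp (w + (k:ℂ) * τ)‖ := by
        rw [hnorm]
        apply Real.exp_le_exp.mpr
        have h6 := mul_le_mul_of_nonneg_left hx (by positivity : (0:ℝ) ≤ 2 * Real.pi)
        linarith
      have h3 : ‖mexp (w + (k:ℂ) * τ)‖ - 1 ≤ ‖1 - mexp (w + (k:ℂ) * τ)‖ := by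
        have := norm_sub_norm_le (mexp (w + (k:ℂ) * τ)) 1
        rw [norm_one] at this
        calc ‖mexp (w + (k:ℂ)*τ)‖ - 1 ≤ ‖mexp (w + (k:ℂ)*τ) - 1‖ := this
          _ = ‖1 - mexp (w + (k:ℂ)*τ)‖ := by rw [norm_sub_rev]
      have hprod : Real.exp (2 * Real.pi * r) * Real.exp (-(2 * Real.pi * r)) = 1 := by
        rw [← Real.exp_add]; ring_nf; exact Real.exp_zero
      have ha : 0 < Real.exp (-(2 * Real.pi * r)) := Real.exp_pos _
      have key : δ ≤ Real.exp (2 * Real.pi * r) - 1 := by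
        rw [hδdef]
        nlinarith [sq_nonneg (1 - Real.exp (-(2 * Real.pi * r))), ha, hprod]
      linarith
    · -- k > -j, i.e. k + j ≥ 1
      have hkj : (1:ℝ) ≤ (k:ℝ) + (j:ℝ) := by
        have : 1 ≤ k + j := by omega
        exact_mod_cast this
      have hx : r ≤ w.im + (k:ℝ) * t := by
        have h5 := mul_le_mul_of_nonneg_right hkj ht.le
        linarith
      have h2 : ‖mexp (w + (k:ℂ) * τ)‖ ≤ Real.exp (-(2 * Real.pi * r)) := by
        rw [hnorm]
        apply Real.exp_le_exp.mpr
        have h6 := mul_le_mul_of_nonneg_left hx (by positivity : (0:ℝ) ≤ 2 * Real.pi)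
        linarith
      have h3 : 1 - ‖mexp (w + (k:ℂ) * τ)‖ ≤ ‖1 - mexp (w + (k:ℂ) * τ)‖ := by
        have := norm_sub_norm_le (1:ℂ) (mexp (w + (k:ℂ) * τ))
        rw [norm_one] at this
        exact this
      rw [hδdef]
      linarith
  -- numerator bound
  have hnum : ∀ (k : ℤ), ∀ w ∈ Metric.closedBall p r,
      ‖mexp ((m : ℂ) * k * (w + z₂) + ((s:ℝ) : ℂ) * w + τ * ((m : ℂ) * k ^ 2 + ((s:ℝ) : ℂ) * k))‖
        ≤ Real.exp (2 * Real.pi * |(s : ℝ)| * Mw) *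
          Real.exp (-Real.pi * (2 * m * t * (k:ℝ) ^ 2 - 2 * A * |(k:ℝ)|)) := by
    intro k w hw
    rw [norm_mexp, ← Real.exp_add]
    apply Real.exp_le_exp.mpr
    have hk2 : ((k:ℂ))^2 = (((k^2 : ℤ)) : ℂ) := by push_cast; ring
    have e1 : (((k:ℂ))^2).im = 0 := by rw [hk2]; exact Complex.intCast_im _
    have e2 : (((k:ℂ))^2).re = (k:ℝ)^2 := by
      rw [hk2, Complex.intCast_re]; push_cast; ring
    have him : ((m : ℂ) * k * (w + z₂) + ((s:ℝ) : ℂ) * w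
        + τ * ((m : ℂ) * k ^ 2 + ((s:ℝ) : ℂ) * k)).im
        = m * (k:ℝ) * (w.im + z₂.im) + (s:ℝ) * w.im + t * (m * (k:ℝ)^2 + (s:ℝ) * (k:ℝ)) := by
      simp [Complex.add_im, Complex.mul_im, Complex.mul_re, Complex.add_re, e1, e2, htdef]
      try ring
    rw [him]
    have h1 : |w.im| ≤ Mw := hballM w hw
    have h2 : -((k:ℝ) * (m * (w.im + z₂.im) + (s:ℝ) * t)) ≤ |(k:ℝ)| * A := by
      have ha : -((k:ℝ) * (m * (w.im + z₂.im) + (s:ℝ) * t))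
          ≤ |(k:ℝ) * (m * (w.im + z₂.im) + (s:ℝ) * t)| := neg_le_abs _
      rw [abs_mul] at ha
      have hb2 : |m * (w.im + z₂.im) + (s:ℝ) * t| ≤ A := by
        rw [hAdef]
        calc |m * (w.im + z₂.im) + (s:ℝ) * t| ≤ |m * (w.im + z₂.im)| + |(s:ℝ) * t| :=
              abs_add_le _ _
          _ ≤ m * (Mw + |z₂.im|) + |(s:ℝ)| * t := by
              rw [abs_mul, abs_mul, abs_of_pos hm0, abs_of_pos ht]
              have h7 : |w.im + z₂.im| ≤ Mw + |z₂.im| :=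
                le_trans (abs_add_le _ _) (by linarith)
              have h8 := mul_le_mul_of_nonneg_left h7 hm0.le
              linarith
      calc -((k:ℝ) * (m * (w.im + z₂.im) + (s:ℝ) * t)) ≤ |(k:ℝ)| * |m * (w.im + z₂.im) + (s:ℝ) * t| := ha
        _ ≤ |(k:ℝ)| * A := by
            apply mul_le_mul_of_nonneg_left hb2 (abs_nonneg _)
    have h3 : -((s:ℝ) * w.im) ≤ |(s:ℝ)| * Mw := by
      have := neg_le_abs ((s:ℝ) * w.im)
      rw [abs_mul] at this
      calc -((s:ℝ) * w.im) ≤ |(s:ℝ)| * |w.im| := this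
        _ ≤ |(s:ℝ)| * Mw := mul_le_mul_of_nonneg_left h1 (abs_nonneg _)
    linarith [mul_le_mul_of_nonneg_left (add_le_add h2 h3) (by positivity : (0:ℝ) ≤ 2 * Real.pi)]
  -- summable bound
  have hu : Summable (fun k : ℤ => Cst * Real.exp (-Real.pi * (2 * m * t * (k:ℝ)^2 - 2 * A * |(k:ℝ)|))) := by
    have h0 : (0:ℝ) < 2 * m * t := by nlinarith [mul_pos hm0 ht]
    have := (summable_pow_mul_jacobiTheta₂_term_bound A h0 0).mul_left Cst
    simpa [Int.cast_abs] using this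
  -- the norm bound for T
  have hTb : ∀ k : ℤ, k ≠ -j → ∀ w ∈ Metric.closedBall p r,
      ‖T k w‖ ≤ Cst * Real.exp (-Real.pi * (2 * m * t * (k:ℝ)^2 - 2 * A * |(k:ℝ)|)) := by
    intro k hk w hw
    simp only [hTdef]
    rw [norm_div, norm_mul, hsgn1 k, one_mul]
    have hb1 := hnum k w hw
    have hb2 := hden k hk w hw
    calc ‖mexp ((m : ℂ) * k * (w + z₂) + ((s:ℝ) : ℂ) * w + τ * ((m : ℂ) * k ^ 2 + ((s:ℝ) : ℂ) * k))‖
          / ‖1 - mexp (w + k * τ)‖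
        ≤ (Real.exp (2 * Real.pi * |(s : ℝ)| * Mw) *
            Real.exp (-Real.pi * (2 * m * t * (k:ℝ)^2 - 2 * A * |(k:ℝ)|))) / δ :=
          div_le_div₀ (by positivity) hb1 hδ hb2
      _ = Cst * Real.exp (-Real.pi * (2 * m * t * (k:ℝ)^2 - 2 * A * |(k:ℝ)|)) := by
          rw [hCdef]; ring
  -- the regular part
  set F : ℤ → ℂ → ℂ := fun k w => if k = -j then 0 else T k w with hFdef
  have hFb : ∀ k : ℤ, ∀ w ∈ Metric.closedBall p r,
      ‖F k w‖ ≤ Cst * Real.exp (-Real.pi * (2 * m * t * (k:ℝ)^2 - 2 * A * |(k:ℝ)|)) := by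
    intro k w hw
    by_cases h : k = -j
    · simp only [hFdef, h, if_pos rfl, norm_zero]
      exact mul_nonneg hCst.le (Real.exp_nonneg _)
    · simp only [hFdef, if_neg h]
      exact hTb k h w hw
  have hTcont : ∀ k : ℤ, k ≠ -j → ContinuousOn (T k) (Metric.closedBall p r) := by
    intro k hk
    simp only [hTdef]
    apply ContinuousOn.div
    · exact (continuous_const.mul (continuous_mexp.comp (by fun_prop))).continuousOn
    · exact (continuous_const.sub (continuous_mexp.comp (by fun_prop))).continuousOn
    · intro w hw h0
      have := hden k hk w hw
      rw [h0, norm_zero] at this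
      linarith
  set g : ℂ → ℂ := fun w => ∑' k : ℤ, F k w with hgdef
  have hgcont : ContinuousOn g (Metric.closedBall p r) := by
    apply continuousOn_tsum (u := fun k : ℤ =>
        Cst * Real.exp (-Real.pi * (2 * m * t * (k:ℝ)^2 - 2 * A * |(k:ℝ)|)))
    · intro k
      by_cases h : k = -j
      · simp only [hFdef, h]
        simp
        exact continuousOn_const
      · simp only [hFdef, if_neg h]
        exact hTcont k h
    · exact hu
    · intro k w hw
      exact hFb k w hw
  -- decomposition
  have hdecomp : ∀ w ∈ Metric.closedBall p r,
      PhiS sgn m (s : ℝ) τ w z₂ = T (-j) w + g w := by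
    intro w hw
    rw [hPhi w]
    have hFsum : Summable (fun k => F k w) :=
      Summable.of_norm_bounded hu (fun k => hFb k w hw)
    have hEsum : Summable (fun k : ℤ => if k = -j then T (-j) w else 0) :=
      summable_of_ne_finset_zero (s := {-j}) (by
        intro b hb
        simp only [Finset.mem_singleton] at hb
        simp [hb])
    have heq : (fun k : ℤ => T k w) =
        fun k : ℤ => F k w + (if k = -j then T (-j) w else 0) := by
      funext k
      by_cases h : k = -j
      · simp [hFdef, h]
      · simp [hFdef, h]
    rw [heq, Summable.tsum_add hFsum hEsum, tsum_ite_eq]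
    ring
  -- limit of the regular part
  have hmemB : Metric.closedBall p r ∈ nhdsWithin p {p}ᶜ :=
    nhdsWithin_le_nhds (Metric.closedBall_mem_nhds p hr)
  have hgpart : Filter.Tendsto (fun w => (w - p) * g w) (nhdsWithin p {p}ᶜ) (nhds 0) := by
    have h1 : Filter.Tendsto (fun w : ℂ => w - p) (nhds p) (nhds 0) := by
      have h0 : Filter.Tendsto (fun w : ℂ => w - p) (nhds p) (nhds (p - p)) :=
        Filter.Tendsto.sub_const Filter.tendsto_id p
      simpa using h0
    have h2 : Filter.Tendsto g (nhds p) (nhds (g p)) :=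
      (hgcont.continuousAt (Metric.closedBall_mem_nhds p hr)).tendsto
    have := h1.mul h2
    rw [zero_mul] at this
    exact this.mono_left nhdsWithin_le_nhds
  -- the singular part
  set c : ℂ := ((-j : ℤ) : ℂ) * τ with hcdef
  set N : ℂ → ℂ := fun w => sgn ^ (-j) *
      mexp ((m : ℂ) * ((-j : ℤ) : ℂ) * (w + z₂) + ((s:ℝ) : ℂ) * w
        + τ * ((m : ℂ) * ((-j : ℤ) : ℂ) ^ 2 + ((s:ℝ) : ℂ) * ((-j : ℤ) : ℂ))) with hNdef
  set h : ℂ → ℂ := fun w => 1 - mexp (w + c) with hhdef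
  have hTN : ∀ w, T (-j) w = N w / h w := fun w => rfl
  have hpc : p + c = (n : ℂ) := by
    simp only [hcdef, hpdef]
    push_cast
    ring
  have hh0 : h p = 0 := by
    simp only [hhdef, hpc, mexp_int n, sub_self]
  have hmexppc : mexp (p + c) = 1 := by rw [hpc]; exact mexp_int n
  have hd : HasDerivAt h (-(2 * (Real.pi:ℂ) * Complex.I)) p := by
    have := (hasDerivAt_mexp c p).const_sub 1
    simp only [hhdef]
    rw [hmexppc, mul_one] at this
    exact this
  have h2πI : (2 * (Real.pi:ℂ) * Complex.I) ≠ 0 := by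
    simp [Real.pi_ne_zero, Complex.I_ne_zero]
  have hd0 : (-(2 * (Real.pi:ℂ) * Complex.I)) ≠ 0 := neg_ne_zero.mpr h2πI
  have hslope : Filter.Tendsto (slope h p) (nhdsWithin p {p}ᶜ)
      (nhds (-(2 * (Real.pi:ℂ) * Complex.I))) := hasDerivAt_iff_tendsto_slope.mp hd
  have hinv : Filter.Tendsto (fun w => (w - p) / h w) (nhdsWithin p {p}ᶜ)
      (nhds ((-(2 * (Real.pi:ℂ) * Complex.I))⁻¹)) := by
    have h1 := hslope.inv₀ hd0
    apply h1.congr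
    intro w
    rw [slope_def_field, hh0, sub_zero, inv_div]
  have hNcont : Continuous N := by
    simp only [hNdef]
    exact continuous_const.mul (continuous_mexp.comp (by fun_prop))
  have hsing : Filter.Tendsto (fun w => (w - p) * T (-j) w) (nhdsWithin p {p}ᶜ)
      (nhds (N p * (-(2 * (Real.pi:ℂ) * Complex.I))⁻¹)) := by
    have h1 : Filter.Tendsto N (nhdsWithin p {p}ᶜ) (nhds (N p)) :=
      (hNcont.tendsto p).mono_left nhdsWithin_le_nhds
    have h2 := h1.mul hinv
    apply h2.congr
    intro w
    rw [hTN w]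
    ring
  -- combine
  have htotal : Filter.Tendsto (fun w => (w - p) * PhiS sgn m (s : ℝ) τ w z₂)
      (nhdsWithin p {p}ᶜ)
      (nhds (N p * (-(2 * (Real.pi:ℂ) * Complex.I))⁻¹ + 0)) := by
    have h1 := hsing.add hgpart
    apply h1.congr'
    apply Filter.eventually_of_mem hmemB
    intro w hw
    simp only [hdecomp w hw]
    ring
  rw [add_zero] at htotal
  -- identify the limit value
  have hval : N p * (-(2 * (Real.pi:ℂ) * Complex.I))⁻¹ =
      -(sgn ^ j) * (1 / (2 * (Real.pi : ℂ) * Complex.I)) *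
        mexp (-(j : ℂ) * ((m2 : ℂ) / 2) * z₂) * mexp ((j : ℂ) * (n : ℂ) * ((m2 : ℂ) / 2)) := by
    have hsgnj : sgn ^ (-j) = sgn ^ j := by
      rcases hsgn with hs1 | hs1 <;> subst hs1
      · simp
      · rw [zpow_neg]
        have h2 : ((-1:ℂ)) ^ j * ((-1:ℂ)) ^ j = 1 := by
          rw [← zpow_add₀ (by norm_num : (-1:ℂ) ≠ 0)]
          rw [show j + j = 2 * j by ring, zpow_mul]
          norm_num
        exact inv_eq_of_mul_eq_one_right h2
    have hζ : (m : ℂ) * ((-j : ℤ) : ℂ) * (p + z₂) + ((s:ℝ) : ℂ) * p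
        + τ * ((m : ℂ) * ((-j : ℤ) : ℂ) ^ 2 + ((s:ℝ) : ℂ) * ((-j : ℤ) : ℂ))
        = (-(j : ℂ) * ((m2 : ℂ) / 2) * z₂) + (((j : ℂ) * (n : ℂ) * ((m2 : ℂ) / 2))
          + ((s * n - m2 * j * n : ℤ) : ℂ)) := by
      simp only [hpdef, hm]
      push_cast
      ring
    simp only [hNdef]
    rw [hζ, mexp_add, mexp_add, mexp_int, mul_one, hsgnj, inv_neg]
    ring
  rw [hval] at htotal
  exact htotal
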